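/- Let f be a Hecke-multiplicative function, x ≥ 1 real, d a squarefree positive integer, and y ≥ 1. Then Σ_{n ≤ x/y, d² | n} |f(n)|² ≤ τ₃(d) · (∏_{p | d} (2 + |f(p²)|²)) · F(yd²) · Σ_{n ≤ x} |f(n)|², where τ₃(d) = #{(a,b,c) : abc = d} and F(t) = (Σ_{n ≤ x/t} |f(n)|²)/(Σ_{n ≤ x} |f(n)|²). -/

import Mathlib

open Finset

def HeckeMult (f : ℕ → ℂ) : Prop :=
  f 1 = 1 ∧ ∀ m n : ℕ, 0 < m → 0 < n →
    f m * f n = ∑ d ∈ (Nat.gcd m n).divisors, f (m * n / d ^ 2)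

lemma hecke_mult_coprime {f : ℕ → ℂ} (hf : HeckeMult f) {a b : ℕ} (ha : 0 < a) (hb : 0 < b)
    (h : Nat.Coprime a b) : f (a * b) = f a * f b := by
  have h2 := hf.2 a b ha hb
  rw [Nat.Coprime] at h
  rw [h] at h2
  simp [Nat.divisors_one] at h2
  simp [h2]

lemma hecke_pp {f : ℕ → ℂ} (hf : HeckeMult f) {p : ℕ} (hp : p.Prime) {a : ℕ} (ha : 2 ≤ a) :
    f (p ^ (a + 2)) = f (p ^ 2) * f (p ^ a) - f (p ^ a) - f (p ^ (a - 2)) := by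
  have h2 := hf.2 (p ^ 2) (p ^ a) (pow_pos hp.pos 2) (pow_pos hp.pos a)
  rw [Nat.gcd_eq_left (pow_dvd_pow p ha)] at h2
  rw [Nat.sum_divisors_prime_pow hp] at h2
  rw [Finset.sum_range_succ, Finset.sum_range_succ, Finset.sum_range_one] at h2
  have e0 : p ^ 2 * p ^ a / (p ^ 0) ^ 2 = p ^ (a + 2) := by
    rw [pow_zero, one_pow, Nat.div_one, ← pow_add, Nat.add_comm]
  have e1 : p ^ 2 * p ^ a / (p ^ 1) ^ 2 = p ^ a := by
    rw [← pow_add, ← pow_mul, Nat.pow_div (by omega) hp.pos]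
    congr 1; omega
  have e2 : p ^ 2 * p ^ a / (p ^ 2) ^ 2 = p ^ (a - 2) := by
    rw [← pow_add, ← pow_mul, Nat.pow_div (by omega) hp.pos]
    congr 1; omega
  rw [e0, e1, e2] at h2
  linear_combination -h2

lemma hecke_p3 {f : ℕ → ℂ} (hf : HeckeMult f) {p : ℕ} (hp : p.Prime) :
    f (p ^ 3) = f (p ^ 2) * f (p ^ 1) - f (p ^ 1) := by
  have h2 := hf.2 (p ^ 2) (p ^ 1) (pow_pos hp.pos 2) (pow_pos hp.pos 1)
  rw [Nat.gcd_eq_right (pow_dvd_pow p one_le_two)] at h2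
  rw [Nat.sum_divisors_prime_pow hp] at h2
  rw [Finset.sum_range_succ, Finset.sum_range_one] at h2
  have e0 : p ^ 2 * p ^ 1 / (p ^ 0) ^ 2 = p ^ 3 := by
    rw [pow_zero, one_pow, Nat.div_one, ← pow_add]
  have e1 : p ^ 2 * p ^ 1 / (p ^ 1) ^ 2 = p ^ 1 := by
    rw [← pow_add, ← pow_mul, Nat.pow_div (by omega) hp.pos]
  rw [e0, e1] at h2
  linear_combination -h2

lemma key_pp {f : ℕ → ℂ} (hf : HeckeMult f) {p : ℕ} (hp : p.Prime) (a : ℕ) :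
    ‖f (p ^ (a + 2))‖ ^ 2 ≤ (2 + ‖f (p ^ 2)‖ ^ 2) *
      (2 * ‖f (p ^ a)‖ ^ 2 +
        (if 2 ≤ a then ‖f (p ^ (a - 2))‖ ^ 2 else 0)) := by
  set A := ‖f (p ^ 2)‖ with hA
  have hA0 : 0 ≤ A := norm_nonneg _
  match a with
  | 0 =>
    simp only [pow_zero, hf.1, if_neg (by omega : ¬ (2:ℕ) ≤ 0)]
    simp only [norm_one, one_pow]
    nlinarith [sq_nonneg A]
  | 1 =>
    have h3 := hecke_p3 hf hp
    set B := ‖f (p ^ 1)‖ with hB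
    have hB0 : 0 ≤ B := norm_nonneg _
    have htri : ‖f (p ^ (1 + 2))‖ ≤ A * B + B := by
      rw [show (1:ℕ) + 2 = 3 from rfl, h3]
      calc ‖f (p ^ 2) * f (p ^ 1) - f (p ^ 1)‖ ≤
          ‖f (p ^ 2) * f (p ^ 1)‖ + ‖f (p ^ 1)‖ :=
            norm_sub_le _ _
        _ = A * B + B := by rw [norm_mul]
    have h0 : 0 ≤ ‖f (p ^ (1 + 2))‖ := norm_nonneg _
    have hsq : ‖f (p ^ (1 + 2))‖ ^ 2 ≤ (A * B + B) ^ 2 :=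
      pow_le_pow_left₀ h0 htri 2
    simp only [if_neg (by omega : ¬ (2:ℕ) ≤ 1)]
    nlinarith [sq_nonneg (A - 1), sq_nonneg B, mul_nonneg hA0 hB0, sq_nonneg (A*B - B)]
  | (n + 2) =>
    have ha : 2 ≤ n + 2 := by omega
    have h3 := hecke_pp hf hp ha
    set B := ‖f (p ^ (n + 2))‖ with hB
    set D := ‖f (p ^ (n + 2 - 2))‖ with hD
    have hB0 : 0 ≤ B := norm_nonneg _
    have hD0 : 0 ≤ D := norm_nonneg _
    have htri : ‖f (p ^ (n + 2 + 2))‖ ≤ A * B + B + D := by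
      rw [h3]
      calc ‖f (p ^ 2) * f (p ^ (n+2)) - f (p ^ (n+2)) - f (p ^ (n+2-2))‖ ≤
          ‖f (p ^ 2) * f (p ^ (n+2)) - f (p ^ (n+2))‖ + D :=
            norm_sub_le _ _
        _ ≤ (‖f (p ^ 2) * f (p ^ (n+2))‖ + B) + D := by
            gcongr; exact norm_sub_le _ _
        _ = A * B + B + D := by rw [norm_mul]
    have h0 : 0 ≤ ‖f (p ^ (n + 2 + 2))‖ := norm_nonneg _
    have hsq : ‖f (p ^ (n + 2 + 2))‖ ^ 2 ≤ (A * B + B + D) ^ 2 :=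
      pow_le_pow_left₀ h0 htri 2
    simp only [if_pos ha]
    nlinarith [sq_nonneg (A*B - B), sq_nonneg (A*D - B), sq_nonneg (B - D),
      mul_nonneg hA0 hB0, mul_nonneg hA0 hD0, mul_nonneg hB0 hD0]

lemma sq_mult_coprime {f : ℕ → ℂ} (hf : HeckeMult f) {a b : ℕ} (ha : 0 < a) (hb : 0 < b)
    (h : Nat.Coprime a b) :
    ‖f (a * b)‖ ^ 2 = ‖f a‖ ^ 2 * ‖f b‖ ^ 2 := by
  rw [hecke_mult_coprime hf ha hb h, norm_mul, mul_pow]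

lemma pointwise {f : ℕ → ℂ} (hf : HeckeMult f) {p t : ℕ} (hp : p.Prime) (hpt : ¬ p ∣ t)
    (ht : 0 < t) {m : ℕ} (hm : 0 < m) :
    ‖f ((p * t) ^ 2 * m)‖ ^ 2 ≤ (2 + ‖f (p ^ 2)‖ ^ 2) *
      (2 * ‖f (t ^ 2 * m)‖ ^ 2 +
        (if p ^ 2 ∣ m then ‖f (t ^ 2 * (m / p ^ 2))‖ ^ 2 else 0)) := by
  set a := m.factorization p with ha
  set m' := m / p ^ a with hm'def
  have hmm' : p ^ a * m' = m := Nat.ordProj_mul_ordCompl_eq_self m p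
  have hpm' : ¬ p ∣ m' := Nat.not_dvd_ordCompl hp hm.ne'
  have hm' : 0 < m' := Nat.ordCompl_pos p hm.ne'
  have copt : Nat.Coprime p (t ^ 2 * m') :=
    Nat.Coprime.mul_right ((hp.coprime_iff_not_dvd.mpr hpt).pow_right 2)
      (hp.coprime_iff_not_dvd.mpr hpm')
  have cop : ∀ k, Nat.Coprime (p ^ k) (t ^ 2 * m') := fun k => copt.pow_left k
  have htm' : 0 < t ^ 2 * m' := Nat.mul_pos (pow_pos ht 2) hm'
  have eq1 : (p * t) ^ 2 * m = p ^ (a + 2) * (t ^ 2 * m') := by rw [← hmm']; ring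
  have eq2 : t ^ 2 * m = p ^ a * (t ^ 2 * m') := by rw [← hmm']; ring
  have hdvd : p ^ 2 ∣ m ↔ 2 ≤ a := hp.pow_dvd_iff_le_factorization hm.ne'
  have g1 : ‖f ((p * t) ^ 2 * m)‖ ^ 2 =
      ‖f (p ^ (a + 2))‖ ^ 2 * ‖f (t ^ 2 * m')‖ ^ 2 := by
    rw [eq1]; exact sq_mult_coprime hf (pow_pos hp.pos _) htm' (cop _)
  have g2 : ‖f (t ^ 2 * m)‖ ^ 2 =
      ‖f (p ^ a)‖ ^ 2 * ‖f (t ^ 2 * m')‖ ^ 2 := by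
    rw [eq2]; exact sq_mult_coprime hf (pow_pos hp.pos _) htm' (cop _)
  have G0 : 0 ≤ ‖f (t ^ 2 * m')‖ ^ 2 := sq_nonneg _
  have g3 : (if p ^ 2 ∣ m then ‖f (t ^ 2 * (m / p ^ 2))‖ ^ 2 else 0) =
      (if 2 ≤ a then ‖f (p ^ (a - 2))‖ ^ 2 else 0) *
        ‖f (t ^ 2 * m')‖ ^ 2 := by
    by_cases hc : 2 ≤ a
    · rw [if_pos (hdvd.mpr hc), if_pos hc]
      have eqm : m / p ^ 2 = p ^ (a - 2) * m' := by
        rw [← hmm', show p ^ a = p ^ 2 * p ^ (a - 2) by rw [← pow_add]; congr 1; omega,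
          mul_assoc, Nat.mul_div_cancel_left _ (pow_pos hp.pos 2)]
      have eq3 : t ^ 2 * (m / p ^ 2) = p ^ (a - 2) * (t ^ 2 * m') := by rw [eqm]; ring
      rw [eq3, sq_mult_coprime hf (pow_pos hp.pos _) htm' (cop _)]
    · rw [if_neg (fun h => hc (hdvd.mp h)), if_neg hc, zero_mul]
  rw [g1, g2, g3]
  calc ‖f (p ^ (a + 2))‖ ^ 2 * ‖f (t ^ 2 * m')‖ ^ 2 ≤
      ((2 + ‖f (p ^ 2)‖ ^ 2) * (2 * ‖f (p ^ a)‖ ^ 2 +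
        (if 2 ≤ a then ‖f (p ^ (a - 2))‖ ^ 2 else 0))) *
        ‖f (t ^ 2 * m')‖ ^ 2 :=
      mul_le_mul_of_nonneg_right (key_pp hf hp a) G0
    _ = _ := by ring

lemma reindex_sum (G : ℕ → ℝ) (q M : ℕ) (hq : 0 < q) :
    ∑ m ∈ Icc 1 M, (if q ∣ m then G (m / q) else 0) = ∑ k ∈ Icc 1 (M / q), G k := by
  rw [← Finset.sum_filter]
  refine Finset.sum_nbij' (fun m => m / q) (fun k => q * k) ?_ ?_ ?_ ?_ ?_
  · intro m hm
    simp only [Finset.mem_filter, Finset.mem_Icc] at hm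
    simp only [Finset.mem_Icc]
    obtain ⟨⟨h1, h2⟩, hdvd⟩ := hm
    constructor
    · rw [Nat.one_le_div_iff hq]
      exact Nat.le_of_dvd (by omega) hdvd
    · exact Nat.div_le_div_right h2
  · intro k hk
    simp only [Finset.mem_Icc] at hk
    simp only [Finset.mem_filter, Finset.mem_Icc]
    refine ⟨⟨by nlinarith [hk.1], ?_⟩, Dvd.intro k rfl⟩
    calc q * k ≤ q * (M / q) := by exact Nat.mul_le_mul_left q hk.2
      _ ≤ M := Nat.mul_div_le M q
  · intro m hm
    simp only [Finset.mem_filter] at hm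
    exact Nat.mul_div_cancel' hm.2
  · intro k hk
    exact Nat.mul_div_cancel_left k hq
  · intro m hm; rfl

lemma T_eq (n : ℕ) : ∑ a ∈ n.divisors, (n / a).divisors.card =
    (ArithmeticFunction.zeta * ArithmeticFunction.sigma 0) n := by
  rw [ArithmeticFunction.zeta_mul_apply]
  have h := Nat.sum_div_divisors n (fun i => i.divisors.card)
  rw [h]
  exact Finset.sum_congr rfl fun a _ => (ArithmeticFunction.sigma_zero_apply a).symm

lemma T_mul {p t : ℕ} (hp : p.Prime) (hpt : ¬ p ∣ t) :
    ∑ a ∈ (p * t).divisors, ((p * t) / a).divisors.card =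
      3 * ∑ a ∈ t.divisors, (t / a).divisors.card := by
  rw [T_eq, T_eq, (ArithmeticFunction.isMultiplicative_zeta.mul
    ArithmeticFunction.isMultiplicative_sigma).map_mul_of_coprime
    (hp.coprime_iff_not_dvd.mpr hpt)]
  congr 1
  rw [ArithmeticFunction.zeta_mul_apply, hp.divisors,
    Finset.sum_pair hp.one_lt.ne]
  · simp only [ArithmeticFunction.sigma_zero_apply, Nat.divisors_one, hp.divisors]
    rw [Finset.card_singleton, Finset.card_pair hp.one_lt.ne]

lemma sum_mono {f : ℕ → ℂ} {M' M : ℕ} (h : M' ≤ M) :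
    ∑ k ∈ Icc 1 M', ‖f k‖ ^ 2 ≤ ∑ k ∈ Icc 1 M, ‖f k‖ ^ 2 :=
  Finset.sum_le_sum_of_subset_of_nonneg (Finset.Icc_subset_Icc_right h)
    (fun _ _ _ => sq_nonneg _)

lemma lemA {f : ℕ → ℂ} (hf : HeckeMult f) :
    ∀ d : ℕ, Squarefree d → ∀ M : ℕ,
      ∑ m ∈ Icc 1 M, ‖f (d ^ 2 * m)‖ ^ 2 ≤
        ((∑ a ∈ d.divisors, (d / a).divisors.card : ℕ) : ℝ) *
          (∏ p ∈ d.primeFactors, (2 + ‖f (p ^ 2)‖ ^ 2)) *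
          ∑ k ∈ Icc 1 M, ‖f k‖ ^ 2 := by
  intro d
  induction d using Nat.strong_induction_on with
  | _ d ih =>
    intro hd M
    by_cases hd1 : d = 1
    · subst hd1
      simp
    · have hd0 : d ≠ 0 := hd.ne_zero
      obtain ⟨p, t, hp, hdeq⟩ : ∃ p t, p.Prime ∧ d = p * t :=
        ⟨d.minFac, d / d.minFac, Nat.minFac_prime hd1,
          (Nat.mul_div_cancel' d.minFac_dvd).symm⟩
      subst hdeq
      have ht : Squarefree t := hd.squarefree_of_dvd ⟨p, mul_comm p t⟩
      have ht0 : 0 < t := Nat.pos_of_ne_zero ht.ne_zero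
      have hpt : ¬ p ∣ t := by
        intro h
        obtain ⟨s, hs⟩ := h
        have : IsUnit p := hd p ⟨s, by rw [hs]; ring⟩
        exact hp.one_lt.ne' (Nat.isUnit_iff.mp this)
      have htlt : t < p * t := by
        have h2 : 2 ≤ p := hp.two_le
        nlinarith
      have IH := ih t htlt ht
      have hc0 : (0:ℝ) ≤ ‖f (p ^ 2)‖ ^ 2 := sq_nonneg _
      have hCt0 : (0:ℝ) ≤ ∏ q ∈ t.primeFactors, (2 + ‖f (q ^ 2)‖ ^ 2) :=
        Finset.prod_nonneg fun q _ => by positivity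
      have hS0 : (0:ℝ) ≤ ∑ k ∈ Icc 1 M, ‖f k‖ ^ 2 :=
        Finset.sum_nonneg fun _ _ => sq_nonneg _
      have step1 : ∑ m ∈ Icc 1 M, ‖f ((p * t) ^ 2 * m)‖ ^ 2 ≤
          ∑ m ∈ Icc 1 M, (2 + ‖f (p ^ 2)‖ ^ 2) *
            (2 * ‖f (t ^ 2 * m)‖ ^ 2 +
            (if p ^ 2 ∣ m then ‖f (t ^ 2 * (m / p ^ 2))‖ ^ 2 else 0)) := by
        refine Finset.sum_le_sum fun m hm => ?_
        have hm1 : 0 < m := by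
          simp only [Finset.mem_Icc] at hm; omega
        exact pointwise hf hp hpt ht0 hm1
      have step2 : ∑ m ∈ Icc 1 M, (2 + ‖f (p ^ 2)‖ ^ 2) *
            (2 * ‖f (t ^ 2 * m)‖ ^ 2 +
            (if p ^ 2 ∣ m then ‖f (t ^ 2 * (m / p ^ 2))‖ ^ 2 else 0)) =
          (2 + ‖f (p ^ 2)‖ ^ 2) *
            (2 * ∑ m ∈ Icc 1 M, ‖f (t ^ 2 * m)‖ ^ 2 +
            ∑ k ∈ Icc 1 (M / p ^ 2), ‖f (t ^ 2 * k)‖ ^ 2) := by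
        rw [← Finset.mul_sum, Finset.sum_add_distrib, ← Finset.mul_sum,
          reindex_sum (fun k => ‖f (t ^ 2 * k)‖ ^ 2) (p ^ 2) M
            (pow_pos hp.pos 2)]
      have b1 : ∑ m ∈ Icc 1 M, ‖f (t ^ 2 * m)‖ ^ 2 ≤
          ((∑ a ∈ t.divisors, (t / a).divisors.card : ℕ) : ℝ) *
            (∏ q ∈ t.primeFactors, (2 + ‖f (q ^ 2)‖ ^ 2)) *
            ∑ k ∈ Icc 1 M, ‖f k‖ ^ 2 := IH M
      have b2 : ∑ k ∈ Icc 1 (M / p ^ 2), ‖f (t ^ 2 * k)‖ ^ 2 ≤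
          ((∑ a ∈ t.divisors, (t / a).divisors.card : ℕ) : ℝ) *
            (∏ q ∈ t.primeFactors, (2 + ‖f (q ^ 2)‖ ^ 2)) *
            ∑ k ∈ Icc 1 M, ‖f k‖ ^ 2 := by
        have hTC0 : (0:ℝ) ≤ ((∑ a ∈ t.divisors, (t / a).divisors.card : ℕ) : ℝ) *
            (∏ q ∈ t.primeFactors, (2 + ‖f (q ^ 2)‖ ^ 2)) :=
          mul_nonneg (Nat.cast_nonneg _) hCt0
        exact le_trans (IH (M / p ^ 2))
          (mul_le_mul_of_nonneg_left (sum_mono (Nat.div_le_self _ _)) hTC0)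
      have hT : (∑ a ∈ (p * t).divisors, ((p * t) / a).divisors.card) =
          3 * ∑ a ∈ t.divisors, (t / a).divisors.card := T_mul hp hpt
      have hCmul : (∏ q ∈ (p * t).primeFactors, (2 + ‖f (q ^ 2)‖ ^ 2)) =
          (2 + ‖f (p ^ 2)‖ ^ 2) *
            ∏ q ∈ t.primeFactors, (2 + ‖f (q ^ 2)‖ ^ 2) := by
        rw [Nat.primeFactors_mul hp.ne_zero ht0.ne', hp.primeFactors,
          ← Finset.insert_eq, Finset.prod_insert (fun h =>
            hpt (Nat.dvd_of_mem_primeFactors h))]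
      rw [hT, hCmul]
      have h2c : (0:ℝ) ≤ 2 + ‖f (p ^ 2)‖ ^ 2 := by positivity
      have h3 : 2 * ∑ m ∈ Icc 1 M, ‖f (t ^ 2 * m)‖ ^ 2 +
          ∑ k ∈ Icc 1 (M / p ^ 2), ‖f (t ^ 2 * k)‖ ^ 2 ≤
          3 * (((∑ a ∈ t.divisors, (t / a).divisors.card : ℕ) : ℝ) *
            (∏ q ∈ t.primeFactors, (2 + ‖f (q ^ 2)‖ ^ 2)) *
            ∑ k ∈ Icc 1 M, ‖f k‖ ^ 2) := by linarith
      have h4 := mul_le_mul_of_nonneg_left h3 h2c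
      refine le_trans step1 (le_trans (le_of_eq step2) (le_trans h4 (le_of_eq ?_)))
      push_cast
      ring

theorem hecke_sum_div_d2 (f : ℕ → ℂ) (hf : HeckeMult f) (x y : ℝ) (hx : 1 ≤ x)
    (hy : 1 ≤ y) (d : ℕ) (hd : Squarefree d)
    (htot : 0 < ∑ n ∈ Finset.Icc 1 ⌊x⌋₊, ‖f n‖ ^ 2)
    (F : ℝ → ℝ)
    (hF : ∀ t : ℝ, F t = (∑ n ∈ Finset.Icc 1 ⌊x / t⌋₊, ‖f n‖ ^ 2) /
      (∑ n ∈ Finset.Icc 1 ⌊x⌋₊, ‖f n‖ ^ 2)) :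
    ∑ n ∈ (Finset.Icc 1 ⌊x / y⌋₊).filter (fun n => d ^ 2 ∣ n), ‖f n‖ ^ 2 ≤
      (∑ a ∈ d.divisors, ((d / a).divisors.card : ℝ)) *
        (∏ p ∈ d.primeFactors, (2 + ‖f (p ^ 2)‖ ^ 2)) *
        F (y * (d : ℝ) ^ 2) * ∑ n ∈ Finset.Icc 1 ⌊x⌋₊, ‖f n‖ ^ 2 := by
  have hd0 : 0 < d := Nat.pos_of_ne_zero hd.ne_zero
  have hd2 : 0 < d ^ 2 := pow_pos hd0 2
  set N := ⌊x / y⌋₊ with hN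
  set M := N / d ^ 2 with hM
  -- rewrite LHS
  have lhs_eq : ∑ n ∈ (Finset.Icc 1 N).filter (fun n => d ^ 2 ∣ n), ‖f n‖ ^ 2 =
      ∑ m ∈ Icc 1 M, ‖f (d ^ 2 * m)‖ ^ 2 := by
    rw [Finset.sum_filter]
    rw [show (∑ n ∈ Icc 1 N, if d ^ 2 ∣ n then ‖f n‖ ^ 2 else 0) =
        ∑ n ∈ Icc 1 N, if d ^ 2 ∣ n then ‖f (d ^ 2 * (n / d ^ 2))‖ ^ 2 else 0 from
      Finset.sum_congr rfl fun n _ => by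
        by_cases h : d ^ 2 ∣ n
        · rw [if_pos h, if_pos h, Nat.mul_div_cancel' h]
        · rw [if_neg h, if_neg h]]
    exact reindex_sum (fun k => ‖f (d ^ 2 * k)‖ ^ 2) (d ^ 2) N hd2
  -- floor identity
  have floor_eq : ⌊x / (y * (d : ℝ) ^ 2)⌋₊ = M := by
    have h1 : x / (y * (d : ℝ) ^ 2) = (x / y) / ((d ^ 2 : ℕ) : ℝ) := by
      push_cast
      rw [div_div]
    rw [h1, Nat.floor_div_natCast]
  -- F value
  have hFval : F (y * (d : ℝ) ^ 2) * (∑ n ∈ Finset.Icc 1 ⌊x⌋₊, ‖f n‖ ^ 2) =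
      ∑ k ∈ Icc 1 M, ‖f k‖ ^ 2 := by
    rw [hF, div_mul_cancel₀ _ htot.ne', floor_eq]
  have key := lemA hf d hd M
  rw [lhs_eq]
  calc ∑ m ∈ Icc 1 M, ‖f (d ^ 2 * m)‖ ^ 2 ≤
      ((∑ a ∈ d.divisors, (d / a).divisors.card : ℕ) : ℝ) *
        (∏ p ∈ d.primeFactors, (2 + ‖f (p ^ 2)‖ ^ 2)) *
        ∑ k ∈ Icc 1 M, ‖f k‖ ^ 2 := key
    _ = _ := by
        rw [← hFval, Nat.cast_sum]
        ring
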